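/- Let d ≥ 1, and let α, β, s be real numbers with s ≤ α and 0 ≤ β. Let M, G_δ : ℝ^d → ℂ be measurable, set G(ξ) := ⟨ξ⟩^{-α} M(ξ), and suppose δ² := ∫_{ℝ^d} ⟨ξ⟩^{2s} |G_δ(ξ) − G(ξ)|² dξ < ∞ and ρ² := ∫_{ℝ^d} ⟨ξ⟩^{2β} |M(ξ)|² dξ < ∞. For a cutoff frequency ξ_c > 0 define the truncated reconstruction M_c(ξ) := ⟨ξ⟩^{α} G_δ(ξ) for |ξ| < ξ_c and M_c(ξ) := 0 for |ξ| ≥ ξ_c. Then (∫_{ℝ^d} |M(ξ) − M_c(ξ)|² dξ)^{1/2} ≤ ⟨ξ_c⟩^{α−s} δ + ⟨ξ_c⟩^{−β} ρ, where ⟨ξ_c⟩ := √(1 + ξ_c²). -/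

import Mathlib

open MeasureTheory
open scoped ENNReal

lemma sqrt_add_le_aux {x y : ℝ} (hx : 0 ≤ x) (hy : 0 ≤ y) :
    Real.sqrt (x + y) ≤ Real.sqrt x + Real.sqrt y := by
  have h1 := Real.sq_sqrt hx
  have h2 := Real.sq_sqrt hy
  have h3 := Real.sqrt_nonneg x
  have h4 := Real.sqrt_nonneg y
  have : x + y ≤ (Real.sqrt x + Real.sqrt y) ^ 2 := by nlinarith
  calc Real.sqrt (x + y) ≤ Real.sqrt ((Real.sqrt x + Real.sqrt y) ^ 2) :=
        Real.sqrt_le_sqrt this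
    _ = Real.sqrt x + Real.sqrt y := Real.sqrt_sq (by positivity)

/-- **Resolution analysis for `Hˢ`-based inverse matching, Fourier domain.**
`⟨ξ⟩ := √(1+‖ξ‖²)`; `G = ⟨ξ⟩^{-α} M` is the exact datum, `G_δ` the noisy datum with
noise of size `δ` in the `Hˢ` norm, `M ∈ H^β` with norm `ρ`, and `M_c` the truncated
reconstruction with cutoff `ξ_c`.  Then
`‖M - M_c‖_{L²} ≤ ⟨ξ_c⟩^{α-s} δ + ⟨ξ_c⟩^{-β} ρ`. -/
theorem hs_inverse_matching_resolution_bound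
    {d : ℕ} (hd : 1 ≤ d) (α β s : ℝ) (hs : s ≤ α) (hβ : 0 ≤ β)
    (M Gδ : EuclideanSpace ℝ (Fin d) → ℂ) (hMmeas : Measurable M) (hGδmeas : Measurable Gδ)
    (G : EuclideanSpace ℝ (Fin d) → ℂ)
    (hG : ∀ ξ, G ξ = ((Real.sqrt (1 + ‖ξ‖ ^ 2) ^ (-α) : ℝ) : ℂ) * M ξ)
    (δ ρ : ℝ) (hδ0 : 0 ≤ δ) (hρ0 : 0 ≤ ρ)
    (hδint : Integrable (fun ξ : EuclideanSpace ℝ (Fin d) =>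
      Real.sqrt (1 + ‖ξ‖ ^ 2) ^ (2 * s) * ‖Gδ ξ - G ξ‖ ^ 2))
    (hδ : δ ^ 2 = ∫ ξ : EuclideanSpace ℝ (Fin d),
      Real.sqrt (1 + ‖ξ‖ ^ 2) ^ (2 * s) * ‖Gδ ξ - G ξ‖ ^ 2)
    (hρint : Integrable (fun ξ : EuclideanSpace ℝ (Fin d) =>
      Real.sqrt (1 + ‖ξ‖ ^ 2) ^ (2 * β) * ‖M ξ‖ ^ 2))
    (hρ : ρ ^ 2 = ∫ ξ : EuclideanSpace ℝ (Fin d),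
      Real.sqrt (1 + ‖ξ‖ ^ 2) ^ (2 * β) * ‖M ξ‖ ^ 2)
    (ξc : ℝ) (hξc : 0 < ξc)
    (Mc : EuclideanSpace ℝ (Fin d) → ℂ)
    (hMc : ∀ ξ, Mc ξ = if ‖ξ‖ < ξc then ((Real.sqrt (1 + ‖ξ‖ ^ 2) ^ α : ℝ) : ℂ) * Gδ ξ else 0) :
    Real.sqrt (∫ ξ : EuclideanSpace ℝ (Fin d), ‖M ξ - Mc ξ‖ ^ 2) ≤
      Real.sqrt (1 + ξc ^ 2) ^ (α - s) * δ + Real.sqrt (1 + ξc ^ 2) ^ (-β) * ρ := by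
  set c : ℝ := Real.sqrt (1 + ξc ^ 2) with hc_def
  have hc0 : 0 < c := Real.sqrt_pos.mpr (by positivity)
  set w : EuclideanSpace ℝ (Fin d) → ℝ := fun ξ => Real.sqrt (1 + ‖ξ‖ ^ 2) with hw_def
  have hw0 : ∀ ξ, 0 < w ξ := fun ξ => Real.sqrt_pos.mpr (by positivity)
  -- the pointwise dominating function
  set F : EuclideanSpace ℝ (Fin d) → ℝ := fun ξ =>
    c ^ (2 * (α - s)) * (w ξ ^ (2 * s) * ‖Gδ ξ - G ξ‖ ^ 2)
      + c ^ (-(2 * β)) * (w ξ ^ (2 * β) * ‖M ξ‖ ^ 2) with hF_def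
  -- pointwise bound
  have hpt : ∀ ξ, ‖M ξ - Mc ξ‖ ^ 2 ≤ F ξ := by
    intro ξ
    rcases lt_or_ge ‖ξ‖ ξc with h | h
    · -- low frequencies: noise term
      have hwc : w ξ ≤ c := by
        apply Real.sqrt_le_sqrt
        have : ‖ξ‖ ^ 2 ≤ ξc ^ 2 := by
          apply sq_le_sq' <;> nlinarith [norm_nonneg ξ]
        linarith
      have hMcξ : Mc ξ = ((w ξ ^ α : ℝ) : ℂ) * Gδ ξ := by rw [hMc ξ, if_pos h]
      have hMξ : M ξ = ((w ξ ^ α : ℝ) : ℂ) * G ξ := by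
        rw [hG ξ, ← mul_assoc, ← Complex.ofReal_mul,
          ← Real.rpow_add (hw0 ξ)]
        simp
      have hnorm : ‖M ξ - Mc ξ‖ = w ξ ^ α * ‖Gδ ξ - G ξ‖ := by
        rw [hMξ, hMcξ, ← mul_sub, norm_mul, Complex.norm_real,
          Real.norm_eq_abs, abs_of_nonneg (Real.rpow_nonneg (hw0 ξ).le α),
          norm_sub_rev]
      have hsq : ‖M ξ - Mc ξ‖ ^ 2
          = w ξ ^ (2 * (α - s)) * (w ξ ^ (2 * s) * ‖Gδ ξ - G ξ‖ ^ 2) := by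
        rw [hnorm, mul_pow, ← Real.rpow_natCast (w ξ ^ α) 2,
          ← Real.rpow_mul (hw0 ξ).le, ← mul_assoc, ← Real.rpow_add (hw0 ξ)]
        congr 1
        push_cast
        ring
      rw [hsq]
      have h1 : w ξ ^ (2 * (α - s)) ≤ c ^ (2 * (α - s)) :=
        Real.rpow_le_rpow (hw0 ξ).le hwc (by linarith)
      have h2 : 0 ≤ c ^ (-(2 * β)) * (w ξ ^ (2 * β) * ‖M ξ‖ ^ 2) := by positivity
      have h3 : 0 ≤ w ξ ^ (2 * s) * ‖Gδ ξ - G ξ‖ ^ 2 := by positivity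
      calc w ξ ^ (2 * (α - s)) * (w ξ ^ (2 * s) * ‖Gδ ξ - G ξ‖ ^ 2)
          ≤ c ^ (2 * (α - s)) * (w ξ ^ (2 * s) * ‖Gδ ξ - G ξ‖ ^ 2) := by
            exact mul_le_mul_of_nonneg_right h1 h3
        _ ≤ F ξ := le_add_of_nonneg_right h2
    · -- high frequencies: truncation term
      have hcw : c ≤ w ξ := by
        apply Real.sqrt_le_sqrt
        have : ξc ^ 2 ≤ ‖ξ‖ ^ 2 := by nlinarith [norm_nonneg ξ]
        linarith
      have hMcξ : Mc ξ = 0 := by rw [hMc ξ, if_neg (not_lt.mpr h)]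
      have hsq : ‖M ξ - Mc ξ‖ ^ 2
          = w ξ ^ (-(2 * β)) * (w ξ ^ (2 * β) * ‖M ξ‖ ^ 2) := by
        rw [hMcξ, sub_zero, ← mul_assoc, ← Real.rpow_add (hw0 ξ)]
        norm_num
      rw [hsq]
      have h1 : w ξ ^ (-(2 * β)) ≤ c ^ (-(2 * β)) :=
        Real.rpow_le_rpow_of_nonpos hc0 hcw (by linarith)
      have h2 : 0 ≤ c ^ (2 * (α - s)) * (w ξ ^ (2 * s) * ‖Gδ ξ - G ξ‖ ^ 2) := by positivity
      have h3 : 0 ≤ w ξ ^ (2 * β) * ‖M ξ‖ ^ 2 := by positivity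
      calc w ξ ^ (-(2 * β)) * (w ξ ^ (2 * β) * ‖M ξ‖ ^ 2)
          ≤ c ^ (-(2 * β)) * (w ξ ^ (2 * β) * ‖M ξ‖ ^ 2) :=
            mul_le_mul_of_nonneg_right h1 h3
        _ ≤ F ξ := le_add_of_nonneg_left h2
  -- integrability
  have hFint : Integrable F := (hδint.const_mul _).add (hρint.const_mul _)
  have hMcmeas : Measurable Mc := by
    have : Mc = fun ξ => if ‖ξ‖ < ξc then ((Real.sqrt (1 + ‖ξ‖ ^ 2) ^ α : ℝ) : ℂ) * Gδ ξ
        else 0 := funext hMc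
    rw [this]
    apply Measurable.ite (measurableSet_lt measurable_norm measurable_const)
    · exact (Complex.measurable_ofReal.comp
        ((continuous_const.add (continuous_norm.pow 2)).sqrt.rpow_const
          (fun ξ => Or.inl (ne_of_gt (hw0 ξ)))).measurable).mul hGδmeas
    · exact measurable_const
  have hLmeas : Measurable fun ξ => ‖M ξ - Mc ξ‖ ^ 2 :=
    ((hMmeas.sub hMcmeas).norm.pow_const 2)
  have hLint : Integrable fun ξ => ‖M ξ - Mc ξ‖ ^ 2 := by
    apply Integrable.mono' hFint hLmeas.aestronglyMeasurable
    filter_upwards with ξ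
    rw [Real.norm_eq_abs, abs_of_nonneg (by positivity)]
    exact hpt ξ
  -- integrate
  have hint : (∫ ξ, ‖M ξ - Mc ξ‖ ^ 2)
      ≤ c ^ (2 * (α - s)) * δ ^ 2 + c ^ (-(2 * β)) * ρ ^ 2 := by
    have := integral_mono hLint hFint hpt
    rwa [integral_add (hδint.const_mul _) (hρint.const_mul _),
      integral_const_mul, integral_const_mul, ← hδ, ← hρ] at this
  -- take square roots
  have hsqrt1 : Real.sqrt (c ^ (2 * (α - s)) * δ ^ 2) = c ^ (α - s) * δ := by
    rw [show c ^ (2 * (α - s)) = (c ^ (α - s)) ^ 2 by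
        rw [← Real.rpow_natCast (c ^ (α - s)) 2, ← Real.rpow_mul hc0.le]
        congr 1; push_cast; ring,
      Real.sqrt_mul (by positivity), Real.sqrt_sq (by positivity), Real.sqrt_sq hδ0]
  have hsqrt2 : Real.sqrt (c ^ (-(2 * β)) * ρ ^ 2) = c ^ (-β) * ρ := by
    rw [show c ^ (-(2 * β)) = (c ^ (-β)) ^ 2 by
        rw [← Real.rpow_natCast (c ^ (-β)) 2, ← Real.rpow_mul hc0.le]
        congr 1; push_cast; ring,
      Real.sqrt_mul (by positivity), Real.sqrt_sq (by positivity), Real.sqrt_sq hρ0]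
  calc Real.sqrt (∫ ξ, ‖M ξ - Mc ξ‖ ^ 2)
      ≤ Real.sqrt (c ^ (2 * (α - s)) * δ ^ 2 + c ^ (-(2 * β)) * ρ ^ 2) :=
        Real.sqrt_le_sqrt hint
    _ ≤ Real.sqrt (c ^ (2 * (α - s)) * δ ^ 2) + Real.sqrt (c ^ (-(2 * β)) * ρ ^ 2) :=
        sqrt_add_le_aux (by positivity) (by positivity)
    _ = c ^ (α - s) * δ + c ^ (-β) * ρ := by rw [hsqrt1, hsqrt2]
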